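/- Let C be a skeletal finite EI category with at least two objects, let x ≠ y be objects with Hom(x,y) nonempty, and view Hom(x,y) as an (Aut(y), Aut(x))-biset. Then every morphism in Hom(x,y) that is unfactorizable remains in the same biset orbit as some chosen representative, and distinct biset orbits of Hom(x,y) give rise to distinct arrows from the trivial module k_x to the trivial module k_y in the quiver construction; in particular, if D is the full subcategory on {x, y} and every morphism of Hom(x,y) is unfactorizable in D, then the number of arrows from k_x to k_y in the ordinary quiver of kD is at least the number of (Aut(y), Aut(x))-orbits of Hom(x,y). -/

import Mathlib

open CategoryTheory
open scoped Classical

/-- Witness that `A` is the category algebra `kC` of the finite category `C`: it has a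
`k`-basis indexed by the morphisms of `C`, the product of two basis elements is the basis
element of their composite when composable and `0` otherwise, and the identity element is
the sum of the identity morphisms. -/
structure CategoryAlgebraData (k : Type*) [Field k] (C : Type*) [Category C] [Fintype C]
    (A : Type*) [Ring A] [Algebra k A] where
  basis : Module.Basis (Σ x y : C, x ⟶ y) k A
  basis_mul_basis : ∀ (x₁ y₁ x₂ y₂ : C) (f : x₁ ⟶ y₁) (g : x₂ ⟶ y₂),
    basis ⟨x₁, y₁, f⟩ * basis ⟨x₂, y₂, g⟩ =
      if h : y₂ = x₁ then basis ⟨x₂, y₁, g ≫ eqToHom h ≫ f⟩ else 0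
  one_def : (1 : A) = ∑ x : C, basis ⟨x, x, 𝟙 x⟩

/-- A morphism is unfactorizable if it is not an isomorphism and in any factorization into
two morphisms one factor is an isomorphism. -/
def Unfactorizable {C : Type*} [Category C] {x z : C} (α : x ⟶ z) : Prop :=
  ¬ IsIso α ∧ ∀ (y : C) (β : x ⟶ y) (γ : y ⟶ z), α = β ≫ γ → IsIso β ∨ IsIso γ

/-- Let `D` be a skeletal finite EI category with exactly two objects `x ≠ y`, with
`Hom(x,y)` nonempty, `Hom(y,x)` empty and every morphism `x ⟶ y` unfactorizable, and with
all automorphism group orders invertible in `k`.  In the ordinary quiver of the category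
algebra `kD`, the number of arrows from the trivial module `k_x` to the trivial module
`k_y` — which equals `dim_k e₂·(rad kD / rad² kD)·e₁` for the averaging idempotents
`e₁ ∈ k Aut(x)`, `e₂ ∈ k Aut(y)` corresponding to the trivial modules — is at least the
number of `(Aut(y), Aut(x))`-orbits of `Hom(x,y)`. -/
theorem stmt18 {k : Type*} [Field k] {C : Type*} [Category C] [Fintype C]
    [∀ a b : C, Finite (a ⟶ b)]
    (hEI : ∀ (z : C) (f : z ⟶ z), IsIso f)
    (hskel : ∀ z w : C, (z ≅ w) → z = w)
    (hord : ∀ z : C, (Nat.card (Aut z) : k) ≠ 0)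
    {x y : C} (hxy : x ≠ y)
    (hobj : ∀ z : C, z = x ∨ z = y)
    (hne : Nonempty (x ⟶ y)) (hempty : IsEmpty (y ⟶ x))
    (hunf : ∀ β : x ⟶ y, Unfactorizable β)
    {A : Type*} [Ring A] [Algebra k A] (hA : CategoryAlgebraData k C A)
    (Λ : Submodule k A)
    (hΛ : Λ = Submodule.span k
      {a : A | ∃ (z w : C) (f : z ⟶ w), ¬ IsIso f ∧ a = hA.basis ⟨z, w, f⟩})
    (e₁ e₂ : A)
    (he₁ : e₁ = (Nat.card (Aut x) : k)⁻¹ • ∑ᶠ g : Aut x, hA.basis ⟨x, x, g.hom⟩)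
    (he₂ : e₂ = (Nat.card (Aut y) : k)⁻¹ • ∑ᶠ g : Aut y, hA.basis ⟨y, y, g.hom⟩)
    (T : A →ₗ[k] A)
    (hT : T = (LinearMap.mulLeft k e₂) ∘ₗ (LinearMap.mulRight k e₁)) :
    Nat.card (Quot fun β β' : (x ⟶ y) =>
        ∃ (g : x ≅ x) (h : y ≅ y), β' = g.hom ≫ β ≫ h.hom) ≤
      Module.finrank k
        (↥(Λ.map T) ⧸
          Submodule.comap (Λ.map T).subtype ((Λ * Λ).map T)) := by
  set Rel : (x ⟶ y) → (x ⟶ y) → Prop := fun β β' =>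
    ∃ (g : x ≅ x) (h : y ≅ y), β' = g.hom ≫ β ≫ h.hom with hRel
  -- finiteness instances
  haveI : Finite (Aut x) := Finite.of_injective (fun i : Aut x => i.hom)
    fun a b h => Iso.ext h
  haveI : Finite (Aut y) := Finite.of_injective (fun i : Aut y => i.hom)
    fun a b h => Iso.ext h
  haveI := Fintype.ofFinite (Aut x)
  haveI := Fintype.ofFinite (Aut y)
  haveI := Fintype.ofFinite (x ⟶ y)
  haveI : Fintype (Quot Rel) := Fintype.ofFinite _
  set b : (x ⟶ y) → A := fun f => hA.basis ⟨x, y, f⟩ with hb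
  -- the generating set of Λ
  have hset : {a : A | ∃ (z w : C) (f : z ⟶ w), ¬ IsIso f ∧ a = hA.basis ⟨z, w, f⟩}
      = Set.range b := by
    ext a
    constructor
    · rintro ⟨z, w, f, hf, rfl⟩
      rcases hobj z with rfl | rfl <;> rcases hobj w with rfl | rfl
      · exact absurd (hEI _ f) hf
      · exact ⟨f, rfl⟩
      · exact (hempty.false f).elim
      · exact absurd (hEI _ f) hf
    · rintro ⟨f, rfl⟩
      exact ⟨x, y, f, fun hi => hxy (hskel x y (@asIso _ _ _ _ f hi)), rfl⟩
  rw [hset] at hΛ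
  subst hΛ
  -- basic multiplication facts
  have key : ∀ f f' : (x ⟶ y), b f * b f' = 0 := by
    intro f f'
    rw [hb]
    rw [hA.basis_mul_basis, dif_neg (fun h => hxy h.symm)]
  have hmul1 : ∀ (f : x ⟶ y) (g : Aut x),
      b f * hA.basis ⟨x, x, g.hom⟩ = b (g.hom ≫ f) := by
    intro f g
    rw [hb, hA.basis_mul_basis, dif_pos rfl]
    simp
  have hmul2 : ∀ (f' : x ⟶ y) (h : Aut y),
      hA.basis ⟨y, y, h.hom⟩ * b f' = b (f' ≫ h.hom) := by
    intro f' h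
    rw [hb, hA.basis_mul_basis, dif_pos rfl]
    simp
  -- Λ * Λ = ⊥
  have hmulbot : (Submodule.span k (Set.range b)) * (Submodule.span k (Set.range b))
      = (⊥ : Submodule k A) := by
    rw [eq_bot_iff]
    refine Submodule.mul_le.2 ?_
    intro m hm n hn
    rw [Submodule.mem_bot]
    induction hm using Submodule.span_induction with
    | mem a ha =>
      induction hn using Submodule.span_induction with
      | mem c hc =>
        obtain ⟨f, rfl⟩ := ha; obtain ⟨f', rfl⟩ := hc; exact key f f'
      | zero => simp
      | add u w _ _ hu hw => rw [mul_add, hu, hw, add_zero]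
      | smul t u _ hu => rw [mul_smul_comm, hu, smul_zero]
    | zero => simp
    | add u w _ _ hu hw => rw [add_mul, hu, hw, add_zero]
    | smul t u _ hu => rw [smul_mul_assoc, hu, smul_zero]
  -- reduce the quotient
  set N : Submodule k A := (Submodule.span k (Set.range b)).map T with hN
  have hq : Submodule.comap N.subtype
      (((Submodule.span k (Set.range b)) * (Submodule.span k (Set.range b))).map T)
      = ⊥ := by
    rw [hmulbot, Submodule.map_bot, Submodule.comap_bot, Submodule.ker_subtype]
  rw [hq, (Submodule.quotEquivOfEqBot _ rfl).finrank_eq]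
  -- compute T on basis elements
  have hT' : ∀ a : A, T a = e₂ * (a * e₁) := by
    intro a; rw [hT]; rfl
  rw [finsum_eq_sum_of_fintype] at he₁ he₂
  have hTb : ∀ f : x ⟶ y, T (b f) =
      (Nat.card (Aut x) : k)⁻¹ • (Nat.card (Aut y) : k)⁻¹ •
        ∑ g : Aut x, ∑ h : Aut y, b (g.hom ≫ f ≫ h.hom) := by
    intro f
    rw [hT']
    calc e₂ * (b f * e₁)
        = e₂ * ((Nat.card (Aut x) : k)⁻¹ • ∑ g : Aut x, b (g.hom ≫ f)) := by
          rw [he₁, mul_smul_comm, Finset.mul_sum]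
          exact congrArg _ (congrArg _ (Finset.sum_congr rfl fun g _ => hmul1 f g))
      _ = (Nat.card (Aut x) : k)⁻¹ • ∑ g : Aut x, (e₂ * b (g.hom ≫ f)) := by
          rw [mul_smul_comm, Finset.mul_sum]
      _ = (Nat.card (Aut x) : k)⁻¹ • ∑ g : Aut x,
            (Nat.card (Aut y) : k)⁻¹ • ∑ h : Aut y, b (g.hom ≫ f ≫ h.hom) := by
          congr 1
          refine Finset.sum_congr rfl fun g _ => ?_
          rw [he₂, smul_mul_assoc, Finset.sum_mul]
          congr 1
          refine Finset.sum_congr rfl fun h _ => ?_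
          rw [hmul2, Category.assoc]
      _ = (Nat.card (Aut x) : k)⁻¹ • (Nat.card (Aut y) : k)⁻¹ •
            ∑ g : Aut x, ∑ h : Aut y, b (g.hom ≫ f ≫ h.hom) := by
          rw [← Finset.smul_sum]
  -- the coordinate functional indexed by orbits
  set coordq : Quot Rel → (A →ₗ[k] k) := fun q =>
    ∑ f' ∈ Finset.univ.filter (fun f' : x ⟶ y => Quot.mk Rel f' = q),
      hA.basis.coord ⟨x, y, f'⟩ with hcoordq
  set Φ : A →ₗ[k] (Quot Rel → k) := LinearMap.pi coordq with hΦ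
  have hinj : Function.Injective (fun f : x ⟶ y => (⟨x, y, f⟩ : Σ z w : C, z ⟶ w)) := by
    intro f₁ f₂ h
    simpa using h
  have hΦb : ∀ (f' : x ⟶ y) (q : Quot Rel),
      Φ (b f') q = if Quot.mk Rel f' = q then 1 else 0 := by
    intro f' q
    rw [hΦ, LinearMap.pi_apply, hcoordq]
    rw [LinearMap.sum_apply]
    have : ∀ f'' : x ⟶ y, (hA.basis.coord ⟨x, y, f''⟩) (b f')
        = if f' = f'' then (1 : k) else 0 := by
      intro f''
      rw [hb, Module.Basis.coord_apply, Module.Basis.repr_self, Finsupp.single_apply]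
      congr 1
      simp only [eq_iff_iff]
      constructor
      · exact fun h => hinj h
      · rintro rfl; rfl
    simp only [this]
    rw [Finset.sum_ite_eq]
    simp [Finset.mem_filter]
  have hΦT : ∀ f : x ⟶ y, Φ (T (b f)) = Pi.single (Quot.mk Rel f) (1 : k) := by
    intro f
    funext q
    rw [hTb f, map_smul, map_smul, map_sum]
    simp only [Pi.smul_apply, Finset.sum_apply, map_sum]
    have horb : ∀ (g : Aut x) (h : Aut y),
        Quot.mk Rel (g.hom ≫ f ≫ h.hom) = Quot.mk Rel f :=
      fun g h => (Quot.sound ⟨g, h, rfl⟩).symm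
    have : ∀ g : Aut x, ∀ h : Aut y, Φ (b (g.hom ≫ f ≫ h.hom)) q
        = if Quot.mk Rel f = q then (1 : k) else 0 := by
      intro g h
      rw [hΦb, horb]
    simp only [this, Finset.sum_const, Finset.card_univ, nsmul_eq_mul, smul_eq_mul]
    rw [Pi.single_apply]
    by_cases hcase : Quot.mk Rel f = q
    · have hx := hord x
      have hy := hord y
      rw [Nat.card_eq_fintype_card] at hx hy
      rw [if_pos hcase, if_pos hcase.symm, mul_one, Nat.card_eq_fintype_card,
        Nat.card_eq_fintype_card]
      field_simp
    · rw [if_neg hcase, if_neg (fun h => hcase h.symm)]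
      simp
  -- membership of the images
  have hmem : ∀ f : x ⟶ y, T (b f) ∈ N :=
    fun f => Submodule.mem_map_of_mem (Submodule.subset_span ⟨f, rfl⟩)
  set v : Quot Rel → N := fun q => ⟨T (b q.out), hmem q.out⟩ with hv
  have hone : LinearIndependent k (fun q : Quot Rel => Pi.single q (1 : k)) := by
    have := (Pi.basisFun k (Quot Rel)).linearIndependent
    have heq : ⇑(Pi.basisFun k (Quot Rel)) = fun q : Quot Rel => Pi.single q (1 : k) := by
      funext q; exact Pi.basisFun_apply k _ q
    rwa [heq] at this
  have hcomp : (⇑Φ ∘ (⇑N.subtype ∘ v)) = fun q : Quot Rel => Pi.single q (1 : k) := by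
    funext q
    simp only [Function.comp_apply, Submodule.coe_subtype, hv]
    rw [hΦT, Quot.out_eq]
  have hvind : LinearIndependent k v := by
    have h0 : LinearIndependent k (⇑Φ ∘ (⇑N.subtype ∘ v)) := by rw [hcomp]; exact hone
    exact LinearIndependent.of_comp N.subtype (LinearIndependent.of_comp Φ h0)
  haveI hfin : Module.Finite k N := by
    rw [Module.Finite.iff_fg]
    exact (Submodule.fg_span (Set.finite_range b)).map T
  calc Nat.card (Quot Rel) = Fintype.card (Quot Rel) := Nat.card_eq_fintype_card
    _ ≤ Module.finrank k N := hvind.fintype_card_le_finrank
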